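/- arXiv:1111.4880 — 8 statements merged into one kernel-verified Lean document; each statement's English description precedes it below -/
import Mathlib

section
/- (Subdivision identity) For all natural numbers j ≤ n and all real numbers x and y, B_j^n(xy) = ∑_{k=j}^n B_j^k(x) B_k^n(y). -/
/-- Bernstein basis function `B_k^n(x) = C(n,k) x^k (1-x)^(n-k)`;
by convention it is `0` when `k > n` since then `C(n,k) = 0`. -/
def bern (n k : ℕ) (x : ℝ) : ℝ := (n.choose k : ℝ) * x ^ k * (1 - x) ^ (n - k)

theorem bern_subdivision (n j : ℕ) (hj : j ≤ n) (x y : ℝ) :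
    bern n j (x * y) = ∑ k ∈ Finset.Icc j n, bern k j x * bern n k y := by
  have hmap : Finset.Icc j n = (Finset.range (n - j + 1)).map
      ⟨fun i => j + i, add_right_injective j⟩ := by
    ext k
    simp only [Finset.mem_Icc, Finset.mem_map, Finset.mem_range,
      Function.Embedding.coeFn_mk]
    constructor
    · rintro ⟨h1, h2⟩; exact ⟨k - j, by omega, by omega⟩
    · rintro ⟨i, hi, rfl⟩; omega
  rw [hmap, Finset.sum_map]
  simp only [Function.Embedding.coeFn_mk]
  unfold bern
  have key : ∀ i ∈ Finset.range (n - j + 1),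
      ((j + i).choose j : ℝ) * x ^ j * (1 - x) ^ (j + i - j) *
        ((n.choose (j + i) : ℝ) * y ^ (j + i) * (1 - y) ^ (n - (j + i)))
      = ((n.choose j : ℝ) * (x * y) ^ j) *
        (((1 - x) * y) ^ i * (1 - y) ^ (n - j - i) * ((n - j).choose i : ℝ)) := by
    intro i hi
    simp only [Finset.mem_range] at hi
    have h1 : j + i ≤ n := by omega
    have h2 : n.choose (j + i) * (j + i).choose j = n.choose j * (n - j).choose i := by
      have h := Nat.choose_mul (n := n) (Nat.le_add_right j i)
      simpa using h
    have h5 : ((n.choose (j + i) : ℝ)) * ((j + i).choose j : ℝ)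
        = (n.choose j : ℝ) * ((n - j).choose i : ℝ) := by exact_mod_cast h2
    have h3 : j + i - j = i := by omega
    have h4 : n - (j + i) = n - j - i := by omega
    rw [h3, h4, pow_add y j i, mul_pow x y j, mul_pow (1 - x) y i]
    linear_combination (x ^ j * (1 - x) ^ i * y ^ j * y ^ i * (1 - y) ^ (n - j - i)) * h5
  rw [Finset.sum_congr rfl key, ← Finset.mul_sum, ← add_pow ((1 - x) * y) (1 - y) (n - j)]
  have h6 : (1 - x) * y + (1 - y) = 1 - x * y := by ring
  rw [h6]
end

section
/- (Monomials in terms of the Bernstein basis) For all natural numbers l ≤ n and every real number x, C(n,l) x^l = ∑_{k=l}^n C(k,l) B_k^n(x). -/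
theorem monomial_eq_sum_bern (n l : ℕ) (hl : l ≤ n) (x : ℝ) :
    (n.choose l : ℝ) * x ^ l = ∑ k ∈ Finset.Icc l n, (k.choose l : ℝ) * bern n k x := by
  have key : (x + (1 - x)) ^ (n - l) =
      ∑ j ∈ Finset.range (n - l + 1), x ^ j * (1 - x) ^ (n - l - j) * ((n - l).choose j : ℝ) :=
    add_pow x (1 - x) (n - l)
  rw [← Finset.Ico_add_one_right_eq_Icc, Finset.sum_Ico_eq_sum_range]
  have hnl : n + 1 - l = n - l + 1 := by omega
  rw [hnl]
  calc (n.choose l : ℝ) * x ^ l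
      = (n.choose l : ℝ) * x ^ l * (x + (1 - x)) ^ (n - l) := by
        simp
    _ = ∑ j ∈ Finset.range (n - l + 1),
          (n.choose l : ℝ) * ((n - l).choose j : ℝ) * x ^ (l + j) * (1 - x) ^ (n - l - j) := by
        rw [key, Finset.mul_sum]
        refine Finset.sum_congr rfl fun j _ => ?_
        rw [pow_add]; ring
    _ = ∑ j ∈ Finset.range (n - l + 1), ((l + j).choose l : ℝ) * bern n (l + j) x := by
        refine Finset.sum_congr rfl fun j hj => ?_
        simp only [Finset.mem_range] at hj
        have hln : l + j ≤ n := by omega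
        have h := Nat.choose_mul (n := n) (Nat.le_add_right l j)
        rw [Nat.add_sub_cancel_left] at h
        have h' : ((n.choose (l + j) : ℕ) : ℝ) * ((l + j).choose l : ℝ)
            = (n.choose l : ℝ) * ((n - l).choose j : ℝ) := by
          exact_mod_cast congrArg (Nat.cast : ℕ → ℝ) h
        have hsub : n - (l + j) = n - l - j := by omega
        unfold bern
        rw [hsub]
        rw [← h']
        ring
end

section
/- For all natural numbers k and l and all real numbers t, the l-th derivative with respect to x of the generating function f_{B,k}(x,t) = t^k x^k e^{(1-x)t}/k! satisfies, for every real x, ∂^l f_{B,k}(x,t)/∂x^l = ∑_{j=0}^l C(l,j) (-1)^{l-j} t^l f_{B,k-j}(x,t), where the terms with j > k are taken to be 0. -/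
/-- Generating function for the Bernstein basis functions:
`f_{B,k}(x,t) = t^k x^k e^((1-x)t) / k!`. -/
noncomputable def bernGen (k : ℕ) (x t : ℝ) : ℝ :=
  t ^ k * x ^ k * Real.exp ((1 - x) * t) / (Nat.factorial k : ℝ)

lemma hasDerivAt_bernGen (m : ℕ) (t x : ℝ) :
    HasDerivAt (fun y : ℝ => bernGen m y t)
      (t * (if 1 ≤ m then bernGen (m - 1) x t else 0) - t * bernGen m x t) x := by
  have h1 : HasDerivAt (fun y : ℝ => (1 - y) * t) (-t) x := by
    simpa using ((hasDerivAt_id x).const_sub 1).mul_const t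
  have h2 : HasDerivAt (fun y : ℝ => Real.exp ((1 - y) * t))
      (Real.exp ((1 - x) * t) * (-t)) x := h1.exp
  have h3 : HasDerivAt (fun y : ℝ => y ^ m) ((m : ℝ) * x ^ (m - 1)) x := hasDerivAt_pow m x
  have h4 := (((h3.mul h2).const_mul (t ^ m)).div_const (Nat.factorial m : ℝ))
  unfold bernGen
  convert h4 using 1
  case e'_8 => funext y; simp only [Pi.mul_apply]; ring
  case e'_4 => rfl
  case e'_5 => rfl
  cases m with
  | zero => norm_num [Nat.factorial, mul_comm]
  | succ n =>
    simp only [Nat.succ_sub_one, if_pos (Nat.succ_le_succ (Nat.zero_le n)), Nat.factorial_succ]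
    have hf : (Nat.factorial n : ℝ) ≠ 0 := Nat.cast_ne_zero.mpr (Nat.factorial_ne_zero n)
    have hn : ((n:ℝ) + 1) ≠ 0 := by positivity
    push_cast
    field_simp
    ring

lemma hasDerivAt_bernGenIf (k j : ℕ) (t x : ℝ) :
    HasDerivAt (fun y : ℝ => if j ≤ k then bernGen (k - j) y t else 0)
      (t * (if j + 1 ≤ k then bernGen (k - (j + 1)) x t else 0)
        - t * (if j ≤ k then bernGen (k - j) x t else 0)) x := by
  by_cases hj : j ≤ k
  · simp only [if_pos hj]
    have h := hasDerivAt_bernGen (k - j) t x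
    by_cases hj1 : j + 1 ≤ k
    · rw [if_pos hj1]
      rw [if_pos (show 1 ≤ k - j by omega), show k - j - 1 = k - (j + 1) by omega] at h
      exact h
    · rw [if_neg hj1]
      rw [if_neg (show ¬ 1 ≤ k - j by omega)] at h
      exact h
  · have hj1 : ¬ (j + 1 ≤ k) := by omega
    simp only [if_neg hj, if_neg hj1, mul_zero, sub_self]
    exact hasDerivAt_const x 0

lemma key_sum (l : ℕ) (g : ℕ → ℝ) :
    ∑ j ∈ Finset.range (l + 1), (l.choose j : ℝ) * (-1) ^ j * (g (j + 1) - g j)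
      = -∑ j ∈ Finset.range (l + 2), ((l + 1).choose j : ℝ) * (-1) ^ j * g j := by
  have hR : ∑ j ∈ Finset.range (l + 2), ((l + 1).choose j : ℝ) * (-1) ^ j * g j
      = (∑ j ∈ Finset.range (l + 1), ((l + 1).choose (j + 1) : ℝ) * (-1) ^ (j + 1) * g (j + 1))
        + g 0 := by
    rw [Finset.sum_range_succ']
    norm_num
  have hP : ∀ j : ℕ, ((l + 1).choose (j + 1) : ℝ) = (l.choose j : ℝ) + (l.choose (j + 1) : ℝ) := by
    intro j
    rw [Nat.choose_succ_succ]
    push_cast; ring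
  have hB : ∑ j ∈ Finset.range (l + 1), (l.choose j : ℝ) * (-1) ^ j * g j
      = (∑ j ∈ Finset.range (l + 1), (l.choose (j + 1) : ℝ) * (-1) ^ (j + 1) * g (j + 1)) + g 0 := by
    rw [Finset.sum_range_succ']
    rw [Finset.sum_range_succ (fun j => (l.choose (j + 1) : ℝ) * (-1) ^ (j + 1) * g (j + 1)) l]
    norm_num
  rw [hR]
  simp only [mul_sub]
  rw [Finset.sum_sub_distrib, hB]
  simp only [hP, add_mul, Finset.sum_add_distrib]
  simp only [pow_succ, mul_neg_one, mul_one, mul_neg, neg_mul, Finset.sum_neg_distrib]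
  ring

lemma neg_one_pow_sub (l j : ℕ) (h : j ≤ l) : (-1 : ℝ) ^ (l - j) = (-1) ^ l * (-1) ^ j := by
  have hsum : (-1 : ℝ) ^ (l - j) * (-1) ^ j = (-1) ^ l := by
    rw [← pow_add]; congr 1; omega
  have sq : (-1 : ℝ) ^ j * (-1) ^ j = 1 := by
    rw [← pow_add]; exact Even.neg_one_pow ⟨j, rfl⟩
  calc (-1 : ℝ) ^ (l - j) = (-1) ^ (l - j) * ((-1) ^ j * (-1) ^ j) := by rw [sq, mul_one]
    _ = ((-1) ^ (l - j) * (-1) ^ j) * (-1) ^ j := by ring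
    _ = (-1) ^ l * (-1) ^ j := by rw [hsum]

theorem iteratedDeriv_bernGen_x (k l : ℕ) (t x : ℝ) :
    iteratedDeriv l (fun y : ℝ => bernGen k y t) x =
      ∑ j ∈ Finset.range (l + 1),
        (l.choose j : ℝ) * (-1 : ℝ) ^ (l - j) * t ^ l *
          (if j ≤ k then bernGen (k - j) x t else 0) := by
  induction l generalizing x with
  | zero => simp
  | succ l ih =>
    rw [iteratedDeriv_succ]
    have hfun : iteratedDeriv l (fun y : ℝ => bernGen k y t)
        = fun y : ℝ => ∑ j ∈ Finset.range (l + 1),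
            (l.choose j : ℝ) * (-1 : ℝ) ^ (l - j) * t ^ l *
              (if j ≤ k then bernGen (k - j) y t else 0) := funext ih
    rw [hfun]
    have hd : HasDerivAt (fun y : ℝ => ∑ j ∈ Finset.range (l + 1),
        (l.choose j : ℝ) * (-1 : ℝ) ^ (l - j) * t ^ l *
          (if j ≤ k then bernGen (k - j) y t else 0))
        (∑ j ∈ Finset.range (l + 1),
          (l.choose j : ℝ) * (-1 : ℝ) ^ (l - j) * t ^ l *
            (t * (if j + 1 ≤ k then bernGen (k - (j + 1)) x t else 0)
              - t * (if j ≤ k then bernGen (k - j) x t else 0))) x :=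
      HasDerivAt.fun_sum fun j _ => (hasDerivAt_bernGenIf k j t x).const_mul _
    rw [hd.deriv]
    set g : ℕ → ℝ := fun j => if j ≤ k then bernGen (k - j) x t else 0 with hg
    show ∑ j ∈ Finset.range (l + 1),
        (l.choose j : ℝ) * (-1 : ℝ) ^ (l - j) * t ^ l * (t * g (j + 1) - t * g j)
      = ∑ j ∈ Finset.range (l + 1 + 1),
        ((l + 1).choose j : ℝ) * (-1 : ℝ) ^ (l + 1 - j) * t ^ (l + 1) * g j
    calc ∑ j ∈ Finset.range (l + 1),
            (l.choose j : ℝ) * (-1 : ℝ) ^ (l - j) * t ^ l * (t * g (j + 1) - t * g j)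
        = ((-1 : ℝ) ^ l * t ^ (l + 1)) *
            ∑ j ∈ Finset.range (l + 1), (l.choose j : ℝ) * (-1) ^ j * (g (j + 1) - g j) := by
          rw [Finset.mul_sum]
          refine Finset.sum_congr rfl fun j hj => ?_
          rw [neg_one_pow_sub l j (Nat.lt_succ_iff.mp (Finset.mem_range.mp hj))]
          ring
      _ = ((-1 : ℝ) ^ l * t ^ (l + 1)) *
            (-∑ j ∈ Finset.range (l + 2), ((l + 1).choose j : ℝ) * (-1) ^ j * g j) := by
          rw [key_sum]
      _ = ∑ j ∈ Finset.range (l + 2),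
            ((l + 1).choose j : ℝ) * ((-1 : ℝ) ^ (l + 1) * (-1) ^ j) * t ^ (l + 1) * g j := by
          rw [← Finset.sum_neg_distrib, Finset.mul_sum]
          refine Finset.sum_congr rfl fun j hj => ?_
          rw [pow_succ]
          ring
      _ = ∑ j ∈ Finset.range (l + 1 + 1),
            ((l + 1).choose j : ℝ) * (-1 : ℝ) ^ (l + 1 - j) * t ^ (l + 1) * g j := by
          refine Finset.sum_congr rfl fun j hj => ?_
          rw [neg_one_pow_sub (l + 1) j (Nat.lt_succ_iff.mp (Finset.mem_range.mp hj))]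
end

section
/- (Higher-order derivatives of the Bernstein basis functions) For all natural numbers l ≤ n, every natural number k, and every real number x, the l-th derivative of B_k^n with respect to x satisfies d^l B_k^n(x)/dx^l = (n!/(n-l)!) ∑_{j=0}^l (-1)^{l-j} C(l,j) B_{k-j}^{n-l}(x), where terms with j > k are taken to be 0. -/
lemma bern_hasDerivAt (m k : ℕ) (x : ℝ) :
    HasDerivAt (fun y : ℝ => bern (m + 1) k y)
      ((m + 1 : ℝ) * ((if 1 ≤ k then bern m (k - 1) x else 0) - bern m k x)) x := by
  have h1 : HasDerivAt (fun y : ℝ => y ^ k) ((k : ℝ) * x ^ (k - 1)) x := hasDerivAt_pow k x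
  have h2 : HasDerivAt (fun y : ℝ => (1 - y) ^ (m + 1 - k))
      (((m + 1 - k : ℕ) : ℝ) * (1 - x) ^ (m + 1 - k - 1) * (-1)) x := by
    have := (hasDerivAt_pow (m + 1 - k) (1 - x)).comp x
      ((hasDerivAt_const x (1 : ℝ)).sub (hasDerivAt_id x))
    simpa [Function.comp_def] using this
  have h := (h1.mul h2).const_mul (((m + 1).choose k : ℝ))
  have hfun : (fun y : ℝ => bern (m + 1) k y)
      = fun y : ℝ => ((m + 1).choose k : ℝ) * (y ^ k * (1 - y) ^ (m + 1 - k)) := by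
    funext y; simp [bern, mul_assoc]
  rw [hfun]
  refine HasDerivAt.congr_deriv h (Eq.symm ?_)
  rcases k with _ | j
  · simp [bern]
  · have e1 : (((m + 1).choose (j + 1) : ℝ)) * ((j : ℝ) + 1) = ((m : ℝ) + 1) * (m.choose j) := by
      have := (Nat.add_one_mul_choose_eq m j).symm
      exact_mod_cast this
    have hex2 : m + 1 - (j + 1) = m - j := by omega
    have e2 : (((m + 1).choose (j + 1) : ℝ)) * ((m - j : ℕ) : ℝ)
        = ((m : ℝ) + 1) * (m.choose (j + 1)) := by
      have h' := (Nat.choose_mul_succ_eq m (j + 1)).symm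
      rw [show m + 1 - (j + 1) = m - j by omega] at h'
      have : (m + 1).choose (j + 1) * (m - j) = m.choose (j + 1) * (m + 1) := h'
      rw [mul_comm ((m : ℝ) + 1)]
      exact_mod_cast this
    have hex : m + 1 - (j + 1) - 1 = m - (j + 1) := by omega
    have hex3 : m - j - 1 = m - (j + 1) := by omega
    simp only [if_pos (Nat.succ_le_succ (Nat.zero_le j)), Nat.succ_sub_one, bern, hex, hex2, hex3]
    push_cast
    linear_combination (-(x ^ j * (1 - x) ^ (m - j))) * e1
      + (x ^ (j + 1) * (1 - x) ^ (m - (j + 1))) * e2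

lemma abel_core (l : ℕ) (S : ℕ → ℝ) :
    ∑ j ∈ Finset.range (l + 1), (-1 : ℝ) ^ j * (l.choose j) * (S (j + 1) - S j)
      = -∑ j ∈ Finset.range (l + 2), (-1 : ℝ) ^ j * ((l + 1).choose j) * S j := by
  have h1 : ∑ j ∈ Finset.range (l + 1), (-1 : ℝ) ^ j * (l.choose j) * (S (j + 1) - S j)
      = (∑ j ∈ Finset.range (l + 1), (-1 : ℝ) ^ j * (l.choose j) * S (j + 1))
        - ∑ j ∈ Finset.range (l + 1), (-1 : ℝ) ^ j * (l.choose j) * S j := by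
    rw [← Finset.sum_sub_distrib]
    exact Finset.sum_congr rfl fun j _ => by ring
  have h2 : ∑ j ∈ Finset.range (l + 1), (-1 : ℝ) ^ j * (l.choose j) * S j
      = (∑ i ∈ Finset.range l, (-1 : ℝ) ^ (i + 1) * (l.choose (i + 1)) * S (i + 1)) + S 0 := by
    rw [Finset.sum_range_succ' (fun j => (-1 : ℝ) ^ j * (l.choose j) * S j) l]
    simp
  have h3 : ∑ i ∈ Finset.range l, (-1 : ℝ) ^ (i + 1) * (l.choose (i + 1)) * S (i + 1)
      = ∑ i ∈ Finset.range (l + 1), (-1 : ℝ) ^ (i + 1) * (l.choose (i + 1)) * S (i + 1) := by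
    rw [Finset.sum_range_succ]
    simp
  rw [h1, h2, h3,
    Finset.sum_range_succ' (fun j => (-1 : ℝ) ^ j * ((l + 1).choose j) * S j) (l + 1)]
  simp only [Nat.choose_succ_succ, Nat.cast_add, pow_zero, Nat.choose_zero_right, Nat.cast_one,
    one_mul]
  rw [neg_add, ← Finset.sum_neg_distrib]
  rw [show ∀ a b c : ℝ, a - (b + c) = (a - b) - c from fun a b c => by ring]
  rw [← Finset.sum_sub_distrib]
  have : ∀ j ∈ Finset.range (l + 1),
      (-1 : ℝ) ^ j * (l.choose j) * S (j + 1)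
        - (-1 : ℝ) ^ (j + 1) * (l.choose (j + 1)) * S (j + 1)
      = -((-1 : ℝ) ^ (j + 1) * ((l.choose j : ℝ) + (l.choose (j + 1) : ℝ)) * S (j + 1)) := by
    intro j _
    ring
  rw [Finset.sum_congr rfl this]
  ring

lemma abel (l : ℕ) (S : ℕ → ℝ) :
    ∑ j ∈ Finset.range (l + 1), (-1 : ℝ) ^ (l - j) * (l.choose j) * (S (j + 1) - S j)
      = ∑ j ∈ Finset.range (l + 2), (-1 : ℝ) ^ (l + 1 - j) * ((l + 1).choose j) * S j := by
  have sign : ∀ a b : ℕ, b ≤ a → (-1 : ℝ) ^ (a - b) = (-1) ^ a * (-1) ^ b := by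
    intro a b hba
    rw [← pow_add, show a + b = (a - b) + 2 * b by omega, pow_add, pow_mul]
    simp
  have e1 : ∑ j ∈ Finset.range (l + 1), (-1 : ℝ) ^ (l - j) * (l.choose j) * (S (j + 1) - S j)
      = (-1 : ℝ) ^ l * ∑ j ∈ Finset.range (l + 1),
          (-1 : ℝ) ^ j * (l.choose j) * (S (j + 1) - S j) := by
    rw [Finset.mul_sum]
    refine Finset.sum_congr rfl fun j hj => ?_
    rw [sign l j (by simpa using Nat.lt_succ_iff.mp (Finset.mem_range.mp hj))]
    ring
  have e2 : ∑ j ∈ Finset.range (l + 2), (-1 : ℝ) ^ (l + 1 - j) * ((l + 1).choose j) * S j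
      = (-1 : ℝ) ^ (l + 1) * ∑ j ∈ Finset.range (l + 2),
          (-1 : ℝ) ^ j * ((l + 1).choose j) * S j := by
    rw [Finset.mul_sum]
    refine Finset.sum_congr rfl fun j hj => ?_
    have hj' := Finset.mem_range.mp hj
    rw [sign (l + 1) j (by omega)]
    ring
  rw [e1, e2, abel_core]
  ring

theorem iteratedDeriv_bern (n k l : ℕ) (hl : l ≤ n) (x : ℝ) :
    iteratedDeriv l (fun y : ℝ => bern n k y) x =
      ((Nat.factorial n : ℝ) / (Nat.factorial (n - l) : ℝ)) *
        ∑ j ∈ Finset.range (l + 1),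
          (-1 : ℝ) ^ (l - j) * (l.choose j : ℝ) *
            (if j ≤ k then bern (n - l) (k - j) x else 0) := by
  induction l generalizing x with
  | zero =>
      simp [iteratedDeriv_zero,
        div_self (Nat.cast_ne_zero.mpr n.factorial_ne_zero : (n.factorial : ℝ) ≠ 0)]
  | succ l ih =>
      have hln : l ≤ n := Nat.le_of_succ_le hl
      obtain ⟨m, hm⟩ : ∃ m, n - l = m + 1 := ⟨n - (l + 1), by omega⟩
      have hm2 : n - (l + 1) = m := by omega
      set S : ℕ → ℝ := fun j => if j ≤ k then bern m (k - j) x else 0 with hS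
      have hterm : ∀ j, HasDerivAt (fun x : ℝ => if j ≤ k then bern (n - l) (k - j) x else 0)
          ((m + 1 : ℝ) * (S (j + 1) - S j)) x := by
        intro j
        rw [hm]
        by_cases hj : j ≤ k
        · have h := bern_hasDerivAt m (k - j) x
          rw [show k - j - 1 = k - (j + 1) by omega] at h
          by_cases hj1 : j + 1 ≤ k
          · simp only [hS, if_pos hj, if_pos hj1]
            simpa [if_pos (show 1 ≤ k - j by omega)] using h
          · simp only [hS, if_pos hj, if_neg hj1]
            simpa [if_neg (show ¬ 1 ≤ k - j by omega)] using h
        · simp only [hS, if_neg hj, if_neg (show ¬ j + 1 ≤ k by omega)]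
          simpa using hasDerivAt_const x (0 : ℝ)
      have hfun : iteratedDeriv l (fun y : ℝ => bern n k y)
          = fun x : ℝ => ((Nat.factorial n : ℝ) / (Nat.factorial (n - l) : ℝ)) *
              ∑ j ∈ Finset.range (l + 1), (-1 : ℝ) ^ (l - j) * (l.choose j : ℝ) *
                (if j ≤ k then bern (n - l) (k - j) x else 0) := funext fun y => ih hln y
      rw [iteratedDeriv_succ, hfun]
      have hsum : HasDerivAt (fun x : ℝ =>
          ((Nat.factorial n : ℝ) / (Nat.factorial (n - l) : ℝ)) *
            ∑ j ∈ Finset.range (l + 1), (-1 : ℝ) ^ (l - j) * (l.choose j : ℝ) *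
              (if j ≤ k then bern (n - l) (k - j) x else 0))
          (((Nat.factorial n : ℝ) / (Nat.factorial (n - l) : ℝ)) *
            ∑ j ∈ Finset.range (l + 1), (-1 : ℝ) ^ (l - j) * (l.choose j : ℝ) *
              ((m + 1 : ℝ) * (S (j + 1) - S j))) x :=
        (HasDerivAt.fun_sum fun j _ => (hterm j).const_mul ((-1 : ℝ) ^ (l - j) * (l.choose j : ℝ))).const_mul _
      rw [hsum.deriv]
      have hpull : ∑ j ∈ Finset.range (l + 1), (-1 : ℝ) ^ (l - j) * (l.choose j : ℝ) *
            ((m + 1 : ℝ) * (S (j + 1) - S j))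
          = (m + 1 : ℝ) * ∑ j ∈ Finset.range (l + 1),
              (-1 : ℝ) ^ (l - j) * (l.choose j : ℝ) * (S (j + 1) - S j) := by
        rw [Finset.mul_sum]
        exact Finset.sum_congr rfl fun j _ => by ring
      have hfact : ((Nat.factorial n : ℝ) / (Nat.factorial (n - l) : ℝ)) * (m + 1 : ℝ)
          = (Nat.factorial n : ℝ) / (Nat.factorial (n - (l + 1)) : ℝ) := by
        rw [hm, hm2, Nat.factorial_succ]
        have h1 : ((m + 1 : ℕ) : ℝ) ≠ 0 := by positivity
        have h2 : ((m.factorial : ℕ) : ℝ) ≠ 0 := Nat.cast_ne_zero.mpr m.factorial_ne_zero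
        push_cast
        field_simp
      rw [hpull, ← mul_assoc, hfact, abel l S]
      rw [hm2]
end

section
/- For all natural numbers n, k₁, k₂ and every real number x, B_{k₁+k₂}^n(x) = (2^{k₁+k₂-n} k₁! k₂!/(k₁+k₂)!) ∑_{j=0}^n C(n,j) B_{k₁}^j(x) B_{k₂}^{n-j}(x); equivalently, ∑_{j=0}^n C(n,j) B_{k₁}^j(x) B_{k₂}^{n-j}(x) = 2^{n-k₁-k₂} ((k₁+k₂)!/(k₁! k₂!)) B_{k₁+k₂}^n(x). -/
lemma bern_key_nat (n k₁ k₂ : ℕ) (h : k₁ + k₂ ≤ n) :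
    ∑ j ∈ Finset.range (n + 1), n.choose j * j.choose k₁ * (n - j).choose k₂
      = 2 ^ (n - k₁ - k₂) * (n.choose (k₁ + k₂) * (k₁ + k₂).choose k₁) := by
  set m := n - k₁ - k₂ with hm
  have h1 : ∑ j ∈ Finset.range (n + 1), n.choose j * j.choose k₁ * (n - j).choose k₂
      = ∑ j ∈ Finset.Ico k₁ (k₁ + m + 1), n.choose j * j.choose k₁ * (n - j).choose k₂ := by
    refine (Finset.sum_subset ?_ ?_).symm
    · intro j hj
      simp only [Finset.mem_Ico] at hj
      simp only [Finset.mem_range]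
      omega
    · intro j hj hj'
      simp only [Finset.mem_range] at hj
      simp only [Finset.mem_Ico, not_and_or, not_le, not_lt] at hj'
      rcases hj' with hj' | hj'
      · rw [Nat.choose_eq_zero_of_lt hj']; ring
      · rw [Nat.choose_eq_zero_of_lt (show n - j < k₂ by omega)]; ring
  rw [h1, Finset.sum_Ico_eq_sum_range]
  have h2 : k₁ + m + 1 - k₁ = m + 1 := by omega
  rw [h2]
  have h3 : ∀ i ∈ Finset.range (m + 1),
      n.choose (k₁ + i) * (k₁ + i).choose k₁ * (n - (k₁ + i)).choose k₂
        = n.choose k₁ * ((n - k₁).choose k₂ * m.choose i) := by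
    intro i hi
    simp only [Finset.mem_range] at hi
    have hi' : i ≤ m := by omega
    rw [Nat.choose_mul (Nat.le_add_right k₁ i)]
    have e1 : k₁ + i - k₁ = i := by omega
    rw [e1]
    have e2 : n - (k₁ + i) = (n - k₁) - i := by omega
    rw [e2]
    have e3 : (n - k₁).choose i = (n - k₁).choose ((n - k₁) - i) :=
      (Nat.choose_symm (show i ≤ n - k₁ by omega)).symm
    rw [mul_assoc, e3,
      Nat.choose_mul (show k₂ ≤ (n - k₁) - i by omega)]
    have e4 : (n - k₁) - k₂ = m := by omega
    have e5 : (n - k₁) - i - k₂ = m - i := by omega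
    rw [e4, e5, Nat.choose_symm hi']
  rw [Finset.sum_congr rfl h3, ← Finset.mul_sum, ← Finset.mul_sum, Nat.sum_range_choose]
  have e6 := Nat.choose_mul (n := n) (Nat.le_add_right k₁ k₂)
  rw [show k₁ + k₂ - k₁ = k₂ by omega] at e6
  rw [e6, ← mul_assoc]; ring

theorem bern_product_sum (n k₁ k₂ : ℕ) (x : ℝ) :
    ∑ j ∈ Finset.range (n + 1), (n.choose j : ℝ) * bern j k₁ x * bern (n - j) k₂ x =
      (2 : ℝ) ^ ((n : ℤ) - (k₁ : ℤ) - (k₂ : ℤ)) *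
        ((Nat.factorial (k₁ + k₂) : ℝ) / ((Nat.factorial k₁ : ℝ) * (Nat.factorial k₂ : ℝ))) *
          bern n (k₁ + k₂) x := by
  by_cases h : k₁ + k₂ ≤ n
  · have hterm : ∀ j ∈ Finset.range (n + 1),
        (n.choose j : ℝ) * bern j k₁ x * bern (n - j) k₂ x
          = ((n.choose j * j.choose k₁ * (n - j).choose k₂ : ℕ) : ℝ)
              * (x ^ (k₁ + k₂) * (1 - x) ^ (n - k₁ - k₂)) := by
      intro j hj
      simp only [Finset.mem_range] at hj
      unfold bern
      by_cases h1 : j < k₁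
      · rw [Nat.choose_eq_zero_of_lt h1]; push_cast; ring
      · by_cases h2 : n - j < k₂
        · rw [Nat.choose_eq_zero_of_lt h2]; push_cast; ring
        · push_cast
          rw [show k₁ + k₂ = k₁ + k₂ from rfl, pow_add x k₁ k₂,
            show n - k₁ - k₂ = (j - k₁) + ((n - j) - k₂) by omega, pow_add]
          ring
    rw [Finset.sum_congr rfl hterm, ← Finset.sum_mul, ← Nat.cast_sum, bern_key_nat n k₁ k₂ h]
    have hz : (2 : ℝ) ^ ((n : ℤ) - (k₁ : ℤ) - (k₂ : ℤ)) = (2 : ℝ) ^ (n - k₁ - k₂ : ℕ) := by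
      rw [show (n : ℤ) - (k₁ : ℤ) - (k₂ : ℤ) = ((n - k₁ - k₂ : ℕ) : ℤ) by omega, zpow_natCast]
    rw [hz]
    have hc : ((k₁ + k₂).choose k₁ : ℝ)
        = (Nat.factorial (k₁ + k₂) : ℝ) / ((Nat.factorial k₁ : ℝ) * (Nat.factorial k₂ : ℝ)) := by
      have := Nat.choose_mul_factorial_mul_factorial (Nat.le_add_right k₁ k₂)
      rw [show k₁ + k₂ - k₁ = k₂ by omega] at this
      have h0 : (Nat.factorial k₁ : ℝ) ≠ 0 := Nat.cast_ne_zero.mpr (Nat.factorial_ne_zero k₁)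
      have h0' : (Nat.factorial k₂ : ℝ) ≠ 0 := Nat.cast_ne_zero.mpr (Nat.factorial_ne_zero k₂)
      field_simp
      rw [show ((k₁+k₂).choose k₁ : ℝ) * (k₁.factorial : ℝ) * (k₂.factorial : ℝ)
        = (((k₁+k₂).choose k₁ * k₁.factorial * k₂.factorial : ℕ) : ℝ) by push_cast; ring, this]
    unfold bern
    rw [show n - (k₁ + k₂) = n - k₁ - k₂ by omega]
    push_cast
    rw [hc]
    ring
  · have hterm : ∀ j ∈ Finset.range (n + 1),
        (n.choose j : ℝ) * bern j k₁ x * bern (n - j) k₂ x = 0 := by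
      intro j hj
      simp only [Finset.mem_range] at hj
      unfold bern
      by_cases h1 : j < k₁
      · rw [Nat.choose_eq_zero_of_lt h1]; push_cast; ring
      · rw [Nat.choose_eq_zero_of_lt (show n - j < k₂ by omega)]; push_cast; ring
    rw [Finset.sum_congr rfl hterm, Finset.sum_const, smul_zero]
    unfold bern
    rw [Nat.choose_eq_zero_of_lt (by omega)]
    push_cast
    ring
end

section
/- For all natural numbers k and n with n ≥ 2k and all real numbers x and y, ∑_{j=0}^n C(n,j) (-1)^{n-j} B_k^j(x) B_k^{n-j}(y) = ((n)_{2k}/(k!)^2) (-xy)^k (y-x)^{n-2k}, where (n)_{2k} = n(n-1)⋯(n-2k+1) denotes the falling factorial (with (n)_0 = 1). -/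
lemma key_choose (n k i : ℕ) (hk : 2 * k ≤ n) (hi : i ≤ n - 2 * k) :
    (n.choose (k + i) : ℝ) * ((k + i).choose k : ℝ) * ((n - (k + i)).choose k : ℝ) =
      (n.descFactorial (2 * k) : ℝ) / ((Nat.factorial k : ℝ)) ^ 2 * ((n - 2 * k).choose i : ℝ) := by
  have h1 : k + i ≤ n := by omega
  have h2 : k ≤ k + i := by omega
  have h3 : k ≤ n - (k + i) := by omega
  have e1 : n - (k + i) - k = n - 2 * k - i := by omega
  have e2 : k + i - k = i := by omega
  rw [Nat.cast_choose ℝ h1, Nat.cast_choose ℝ h2, Nat.cast_choose ℝ h3,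
    Nat.cast_choose ℝ hi, Nat.descFactorial_eq_factorial_mul_choose, Nat.cast_mul,
    Nat.cast_choose ℝ hk, e1, e2]
  have hn : n - (k + i) = (n - 2 * k - i) + k := by omega
  rw [hn]
  have f0 : (Nat.factorial (n - 2 * k - i) : ℝ) ≠ 0 := by positivity
  have f1 : (Nat.factorial k : ℝ) ≠ 0 := by positivity
  have f2 : (Nat.factorial i : ℝ) ≠ 0 := by positivity
  have f3 : (Nat.factorial (k + i) : ℝ) ≠ 0 := by positivity
  have f4 : (Nat.factorial (n - 2 * k) : ℝ) ≠ 0 := by positivity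
  have f5 : (Nat.factorial (2 * k) : ℝ) ≠ 0 := by positivity
  have f6 : (Nat.factorial ((n - 2 * k - i) + k) : ℝ) ≠ 0 := by positivity
  field_simp

theorem bern_alternating_product_sum (n k : ℕ) (hk : 2 * k ≤ n) (x y : ℝ) :
    ∑ j ∈ Finset.range (n + 1),
        (n.choose j : ℝ) * (-1 : ℝ) ^ (n - j) * bern j k x * bern (n - j) k y =
      ((n.descFactorial (2 * k) : ℝ) / ((Nat.factorial k : ℝ)) ^ 2) *
        (-(x * y)) ^ k * (y - x) ^ (n - 2 * k) := by
  set m := n - 2 * k with hm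
  have hsub : Finset.Ico k (n - k + 1) ⊆ Finset.range (n + 1) := by
    intro j hj
    simp only [Finset.mem_Ico] at hj
    simp only [Finset.mem_range]
    omega
  rw [← Finset.sum_subset hsub]
  · rw [show n - k + 1 = k + (m + 1) by omega, Finset.sum_Ico_eq_sum_range,
      show k + (m + 1) - k = m + 1 by omega]
    have hyx : (y - x) = (1 - x) + (-(1 - y)) := by ring
    rw [hyx, add_pow, Finset.mul_sum]
    refine Finset.sum_congr rfl fun i hi => ?_
    rw [Finset.mem_range] at hi
    have hi' : i ≤ m := by omega
    simp only [bern]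
    have e1 : k + i - k = i := by omega
    have e2 : n - (k + i) - k = m - i := by omega
    have e3 : n - (k + i) = m - i + k := by omega
    rw [e1, e2, e3]
    have hkey := key_choose n k i hk hi'
    rw [e3] at hkey
    have hs : ((-1 : ℝ)) ^ (m - i + k) = (-1) ^ (m - i) * (-1) ^ k := pow_add _ _ _
    calc (n.choose (k + i) : ℝ) * (-1 : ℝ) ^ (m - i + k) *
          ((↑((k + i).choose k)) * x ^ k * (1 - x) ^ i) *
          ((↑((m - i + k).choose k)) * y ^ k * (1 - y) ^ (m - i))
        = ((n.choose (k + i) : ℝ) * (↑((k + i).choose k)) * (↑((m - i + k).choose k))) *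
          ((-1) ^ (m - i) * (-1) ^ k * (x ^ k * y ^ k) * ((1 - x) ^ i * (1 - y) ^ (m - i))) := by
          rw [hs]; ring
      _ = _ := by
          rw [hkey, neg_pow (x * y), neg_pow (1 - y), mul_pow]
          ring
  · intro j hj hj'
    simp only [Finset.mem_range] at hj
    simp only [Finset.mem_Ico, not_and_or, not_le, not_lt] at hj'
    rcases hj' with h | h
    · have : (j.choose k : ℝ) = 0 := by
        rw [Nat.choose_eq_zero_of_lt h]; simp
      simp [bern, this]
    · have : ((n - j).choose k : ℝ) = 0 := by
        rw [Nat.choose_eq_zero_of_lt (by omega)]; simp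
      simp [bern, this]
end

section
/- For all natural numbers k ≤ n and every real number x, ∑_{j=0}^{n-k} (-1)^j C(n,j) B_k^{n-j}(x) = (-1)^{n-k} C(n,k) x^n. -/
theorem bern_sum_identity_two (n k : ℕ) (hk : k ≤ n) (x : ℝ) :
    ∑ j ∈ Finset.range (n - k + 1), (-1 : ℝ) ^ j * (n.choose j : ℝ) * bern (n - j) k x =
      (-1 : ℝ) ^ (n - k) * (n.choose k : ℝ) * x ^ n := by
  have key : ∀ j ∈ Finset.range (n - k + 1),
      (-1 : ℝ) ^ j * (n.choose j : ℝ) * bern (n - j) k x =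
      (n.choose k : ℝ) * x ^ k *
        ((-1 : ℝ) ^ j * (1 - x) ^ (n - k - j) * ((n - k).choose j : ℝ)) := by
    intro j hj
    rw [Finset.mem_range] at hj
    have hj' : j ≤ n - k := by omega
    have h1 : n.choose j * (n - j).choose k = n.choose k * (n - k).choose j := by
      have h := Nat.choose_mul (n := n) (k := n - j) (s := k) (by omega)
      have hsym : n.choose (n - j) = n.choose j := Nat.choose_symm (by omega)
      rw [← hsym, h, show n - j - k = n - k - j by omega, Nat.choose_symm hj']
    have h2 : ((n.choose j : ℝ)) * ((n - j).choose k : ℝ) =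
        (n.choose k : ℝ) * ((n - k).choose j : ℝ) := by exact_mod_cast congrArg Nat.cast h1
    simp only [bern, show n - j - k = n - k - j by omega]
    linear_combination (x ^ k * (1 - x) ^ (n - k - j) * (-1 : ℝ) ^ j) * h2
  rw [Finset.sum_congr rfl key, ← Finset.mul_sum]
  have hb : ∑ j ∈ Finset.range (n - k + 1),
      (-1 : ℝ) ^ j * (1 - x) ^ (n - k - j) * ((n - k).choose j : ℝ) =
      ((-1 : ℝ) + (1 - x)) ^ (n - k) := by
    rw [add_pow]
  rw [hb, show (-1 : ℝ) + (1 - x) = -x by ring, neg_pow]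
  rw [show n = k + (n - k) by omega]
  rw [show k + (n - k) - k = n - k by omega]
  ring
end

section
/- For all natural numbers k ≤ n and every real number x, ∑_{j=0}^{n-k} (-1)^j C(n,j) (1-x)^j B_k^{n-j}(x) equals x^k when n = k, and equals 0 when n ≠ k. -/
theorem bern_sum_identity_three (n k : ℕ) (hk : k ≤ n) (x : ℝ) :
    ∑ j ∈ Finset.range (n - k + 1),
        (-1 : ℝ) ^ j * (n.choose j : ℝ) * (1 - x) ^ j * bern (n - j) k x =
      if n = k then x ^ k else 0 := by
  have hchoose : ∀ j, j ≤ n - k →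
      n.choose j * (n - j).choose k = n.choose k * (n - k).choose j := by
    intro j hj
    have hjk : j + k ≤ n := by omega
    have h1 := Nat.choose_mul (n := n) (k := j + k) (s := k) (Nat.le_add_left _ _)
    have h2 := Nat.choose_mul (n := n) (k := j + k) (s := j) (Nat.le_add_right _ _)
    have hsymm : (j + k).choose k = (j + k).choose j := by
      rw [← Nat.choose_symm (Nat.le_add_right j k)]; congr 1; omega
    rw [hsymm, Nat.add_sub_cancel] at h1
    rw [Nat.add_sub_cancel_left] at h2
    exact h2.symm.trans h1
  have key : ∀ j ∈ Finset.range (n - k + 1),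
      (-1 : ℝ) ^ j * (n.choose j : ℝ) * (1 - x) ^ j * bern (n - j) k x =
      ((n.choose k : ℝ) * x ^ k * (1 - x) ^ (n - k)) *
        ((-1 : ℝ) ^ j * ((n - k).choose j : ℝ)) := by
    intro j hj
    rw [Finset.mem_range] at hj
    have hj' : j ≤ n - k := by omega
    unfold bern
    have hsub : n - j - k = n - k - j := by omega
    have hpow : (1 - x) ^ j * (1 - x) ^ (n - k - j) = (1 - x) ^ (n - k) := by
      rw [← pow_add]; congr 1; omega
    have hc : (n.choose j : ℝ) * ((n - j).choose k : ℝ) =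
        (n.choose k : ℝ) * ((n - k).choose j : ℝ) := by
      exact_mod_cast hchoose j hj'
    rw [hsub]
    calc (-1 : ℝ) ^ j * (n.choose j : ℝ) * (1 - x) ^ j *
          ((((n - j).choose k : ℝ)) * x ^ k * (1 - x) ^ (n - k - j))
        = (-1 : ℝ) ^ j * ((n.choose j : ℝ) * ((n - j).choose k : ℝ)) * x ^ k *
          ((1 - x) ^ j * (1 - x) ^ (n - k - j)) := by ring
      _ = ((n.choose k : ℝ) * x ^ k * (1 - x) ^ (n - k)) *
          ((-1 : ℝ) ^ j * ((n - k).choose j : ℝ)) := by rw [hc, hpow]; ring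
  rw [Finset.sum_congr rfl key, ← Finset.mul_sum]
  have halt : ∑ j ∈ Finset.range (n - k + 1), (-1 : ℝ) ^ j * ((n - k).choose j : ℝ) =
      if n - k = 0 then 1 else 0 := by
    by_cases h0 : n - k = 0
    · simp [h0]
    · rw [if_neg h0]
      exact_mod_cast congrArg (Int.cast : ℤ → ℝ)
        (Int.alternating_sum_range_choose_of_ne h0)
  rw [halt]
  by_cases h : n = k
  · subst h
    simp [Nat.sub_self]
  · have : n - k ≠ 0 := by omega
    simp [h, this]
end
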